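/- Let p = 2l and assume f satisfies the μ-PL condition in y. Then for all x, z ∈ ℝ^{d1} and y ∈ ℝ^{d2}: ‖x*(y,z) − x*(z)‖² ≤ (2/(lμ))‖∇_y f(x,y)‖² + (2/(lμ))‖∇_x f̂(x,y,z)‖². -/

import Mathlib

open Set Metric
open scoped RealInnerProductSpace

noncomputable def gradx {d1 d2 : ℕ}
    (f : EuclideanSpace ℝ (Fin d1) → EuclideanSpace ℝ (Fin d2) → ℝ)
    (x : EuclideanSpace ℝ (Fin d1)) (y : EuclideanSpace ℝ (Fin d2)) :
    EuclideanSpace ℝ (Fin d1) :=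
  gradient (fun x' => f x' y) x

noncomputable def grady {d1 d2 : ℕ}
    (f : EuclideanSpace ℝ (Fin d1) → EuclideanSpace ℝ (Fin d2) → ℝ)
    (x : EuclideanSpace ℝ (Fin d1)) (y : EuclideanSpace ℝ (Fin d2)) :
    EuclideanSpace ℝ (Fin d2) :=
  gradient (fun y' => f x y') y

/-- `f` is differentiable and `l`-smooth: the gradient is `l`-Lipschitz with respect to the
Euclidean norm on the product space (stated in squared form). -/
def IsLSmooth {d1 d2 : ℕ} (l : ℝ)
    (f : EuclideanSpace ℝ (Fin d1) → EuclideanSpace ℝ (Fin d2) → ℝ) : Prop :=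
  Differentiable ℝ (fun w : EuclideanSpace ℝ (Fin d1) × EuclideanSpace ℝ (Fin d2) => f w.1 w.2) ∧
  ∀ x₁ x₂ y₁ y₂,
    ‖gradx f x₁ y₁ - gradx f x₂ y₂‖ ^ 2 + ‖grady f x₁ y₁ - grady f x₂ y₂‖ ^ 2
      ≤ l ^ 2 * (‖x₁ - x₂‖ ^ 2 + ‖y₁ - y₂‖ ^ 2)

/-- `f̂(x, y, z) = f(x, y) + (p/2)‖x − z‖²`. -/
noncomputable def fhat {d1 d2 : ℕ}
    (f : EuclideanSpace ℝ (Fin d1) → EuclideanSpace ℝ (Fin d2) → ℝ) (p : ℝ)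
    (x : EuclideanSpace ℝ (Fin d1)) (y : EuclideanSpace ℝ (Fin d2))
    (z : EuclideanSpace ℝ (Fin d1)) : ℝ :=
  f x y + p / 2 * ‖x - z‖ ^ 2


set_option maxHeartbeats 1000000

/-- with `p = 2l` and the `μ`-PL condition in `y`,
`‖x*(y,z) − x*(z)‖² ≤ (2/(lμ))‖∇_y f(x,y)‖² + (2/(lμ))‖∇_x f̂(x,y,z)‖²` for all `x, z, y`.
Here the supremum `sup_y f(x,y)` is attained at `ymax x`, so that
`Φ(x,z) = sup_y f̂(x,y,z) = f̂(x, ymax x, z)`, whose minimizer in `x` is `x*(z)`. -/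
theorem statement5 {d1 d2 : ℕ} (l μ : ℝ) (hl : 0 < l) (hμ : 0 < μ)
    (f : EuclideanSpace ℝ (Fin d1) → EuclideanSpace ℝ (Fin d2) → ℝ)
    (hf : IsLSmooth l f)
    -- `μ`-PL condition in `y`: the supremum in `y` is finite, attained at `ymax x`, and
    -- `‖∇_y f(x,y)‖² ≥ 2μ(sup_{y'} f(x,y') − f(x,y))`
    (ymax : EuclideanSpace ℝ (Fin d1) → EuclideanSpace ℝ (Fin d2))
    (hymax : ∀ x y, f x y ≤ f x (ymax x))
    (hPL : ∀ x y, 2 * μ * (f x (ymax x) - f x y) ≤ ‖grady f x y‖ ^ 2)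
    -- `x*(y, z)`: the (unique) minimizer of `x ↦ f̂(x, y, z)` with `p = 2l`
    (xstar : EuclideanSpace ℝ (Fin d2) → EuclideanSpace ℝ (Fin d1) → EuclideanSpace ℝ (Fin d1))
    (hxstar : ∀ y z x, fhat f (2 * l) (xstar y z) y z ≤ fhat f (2 * l) x y z)
    -- `x*(z)`: the (unique) minimizer of `x ↦ Φ(x,z) = sup_y f̂(x,y,z) = f̂(x, ymax x, z)`
    (xstarz : EuclideanSpace ℝ (Fin d1) → EuclideanSpace ℝ (Fin d1))
    (hxstarz : ∀ z x, fhat f (2 * l) (xstarz z) (ymax (xstarz z)) z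
        ≤ fhat f (2 * l) x (ymax x) z) :
    ∀ (x z : EuclideanSpace ℝ (Fin d1)) (y : EuclideanSpace ℝ (Fin d2)),
      ‖xstar y z - xstarz z‖ ^ 2
        ≤ 2 / (l * μ) * ‖grady f x y‖ ^ 2
          + 2 / (l * μ) * ‖gradx f x y + (2 * l) • (x - z)‖ ^ 2 := by
  obtain ⟨hdiff, hlip⟩ := hf
  intro x z y
  set a := xstar y z with ha
  set b := xstarz z with hb
  set G : EuclideanSpace ℝ (Fin d1) → EuclideanSpace ℝ (Fin d1) :=
    fun u => gradx f u y + (2*l) • (u - z) with hG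
  set g : EuclideanSpace ℝ (Fin d1) → ℝ := fun u => fhat f (2*l) u y z with hgdef
  -- gradient of g
  have hg : ∀ u, HasGradientAt g (G u) u := by
    intro u
    have hdx : DifferentiableAt ℝ (fun x' => f x' y) u :=
      (hdiff (u, y)).comp (g := fun w : EuclideanSpace ℝ (Fin d1) × EuclideanSpace ℝ (Fin d2) => f w.1 w.2) u (DifferentiableAt.prodMk (differentiableAt_id (𝕜 := ℝ) (x := u)) (differentiableAt_const (𝕜 := ℝ) (x := u) y))
    have h1 : HasFDerivAt (fun x' => f x' y) (InnerProductSpace.toDual ℝ _ (gradx f u y)) u :=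
      hdx.hasGradientAt.hasFDerivAt
    have h2 : HasFDerivAt (fun u' : EuclideanSpace ℝ (Fin d1) => ‖u' - z‖^2)
        (2 • (innerSL ℝ (u - z)).comp (ContinuousLinearMap.id ℝ _)) u := by
      simpa using ((hasFDerivAt_id u).sub_const z).norm_sq
    have h3 := h1.add (h2.const_mul ((2*l)/2))
    rw [hasGradientAt_iff_hasFDerivAt]
    refine h3.congr_fderiv ?_
    ext v
    simp only [hG]
    simp only [ContinuousLinearMap.add_apply, ContinuousLinearMap.smul_apply,
      ContinuousLinearMap.comp_apply, ContinuousLinearMap.coe_id', id_eq,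
      InnerProductSpace.toDual_apply_apply, innerSL_apply_apply, inner_add_left,
      real_inner_smul_left, smul_eq_mul, two_smul]
    ring
  -- Lipschitz bound in x
  have lipx : ∀ u v, ‖gradx f u y - gradx f v y‖ ≤ l * ‖u - v‖ := by
    intro u v
    have h := hlip u v y y
    simp only [sub_self, norm_zero] at h
    nlinarith [norm_nonneg (gradx f u y - gradx f v y), norm_nonneg (u - v),
      norm_nonneg (grady f u y - grady f v y), sq_nonneg (‖gradx f u y - gradx f v y‖ - l * ‖u - v‖),
      mul_nonneg hl.le (norm_nonneg (u - v))]
  -- strong monotonicity of G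
  have mono : ∀ u v, l * ‖u - v‖^2 ≤ ⟪G u - G v, u - v⟫ := by
    intro u v
    have h1 : G u - G v = (gradx f u y - gradx f v y) + (2*l) • (u - v) := by
      simp only [hG]
      module
    rw [h1]
    have h2 : ⟪(gradx f u y - gradx f v y) + (2*l) • (u - v), u - v⟫
        = ⟪gradx f u y - gradx f v y, u - v⟫ + (2*l) * ‖u - v‖^2 := by
      rw [inner_add_left, real_inner_smul_left, real_inner_self_eq_norm_sq]
    rw [h2]
    have h3 := abs_real_inner_le_norm (gradx f u y - gradx f v y) (u - v)
    have h4 := lipx u v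
    nlinarith [abs_le.1 h3, norm_nonneg (u - v)]
  -- gradient vanishes at the minimizer a
  have hGa : G a = 0 := by
    have hmin : IsLocalMin g a := Filter.Eventually.of_forall (fun u => hxstar y z u)
    have h0 : fderiv ℝ g a = 0 := hmin.fderiv_eq_zero
    have h1 : fderiv ℝ g a = InnerProductSpace.toDual ℝ _ (G a) := (hg a).hasFDerivAt.fderiv
    have := h1.symm.trans h0
    simpa using (InnerProductSpace.toDual ℝ (EuclideanSpace ℝ (Fin d1))).map_eq_zero_iff.1 this
  -- quadratic growth at a
  have quad : g a + l/2 * ‖b - a‖^2 ≤ g b := by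
    set c : ℝ → EuclideanSpace ℝ (Fin d1) := fun t => a + t • (b - a) with hc
    have hcder : ∀ t : ℝ, HasDerivAt c (b - a) t := by
      intro t
      have h := ((hasDerivAt_id t).smul_const (b - a)).const_add a
      rw [one_smul] at h
      exact h
    have hqder : ∀ t : ℝ, HasDerivAt (fun s => g (c s) - l/2 * s^2 * ‖b - a‖^2)
        (⟪G (c t), b - a⟫ - l * t * ‖b - a‖^2) t := by
      intro t
      have h1 : HasDerivAt (fun s => g (c s)) (⟪G (c t), b - a⟫) t := by
        have := (hg (c t)).hasFDerivAt.comp_hasDerivAt t (hcder t)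
        simp [InnerProductSpace.toDual_apply_apply] at this
        exact this
      have h2 : HasDerivAt (fun s : ℝ => l/2 * s^2 * ‖b - a‖^2) (l * t * ‖b - a‖^2) t := by
        have h := (((hasDerivAt_id t).pow 2).const_mul (l/2)).mul_const (‖b - a‖^2)
        exact h.congr_deriv (by simp only [id_eq, Nat.add_one_sub_one, pow_one, Nat.cast_ofNat, mul_one]; ring)
      exact h1.sub h2
    have hmono : MonotoneOn (fun s => g (c s) - l/2 * s^2 * ‖b - a‖^2) (Icc (0:ℝ) 1) := by
      apply monotoneOn_of_deriv_nonneg (convex_Icc 0 1)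
      · exact Continuous.continuousOn (by
          have : Continuous (fun s => g (c s) - l/2 * s^2 * ‖b - a‖^2) :=
            continuous_iff_continuousAt.2 fun t => (hqder t).continuousAt
          exact this)
      · intro t _
        exact (hqder t).differentiableAt.differentiableWithinAt
      · intro t ht
        rw [interior_Icc] at ht
        rw [(hqder t).deriv]
        have ht0 : 0 < t := ht.1
        have hkey := mono (c t) a
        have hca : c t - a = t • (b - a) := by simp [hc]
        rw [hGa, sub_zero, hca] at hkey
        rw [real_inner_smul_right] at hkey
        have hn : ‖t • (b - a)‖^2 = t^2 * ‖b - a‖^2 := by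
          rw [norm_smul]
          simp [abs_of_pos ht0]
          ring
        rw [hn] at hkey
        nlinarith [hkey, ht0]
    have h01 : g (c 0) - l/2 * (0:ℝ)^2 * ‖b - a‖^2 ≤ g (c 1) - l/2 * (1:ℝ)^2 * ‖b - a‖^2 :=
      hmono (by simp : (0:ℝ) ∈ Icc (0:ℝ) 1) (by simp : (1:ℝ) ∈ Icc (0:ℝ) 1) zero_le_one
    have hc0 : c 0 = a := by simp [hc]
    have hc1 : c 1 = b := by simp [hc]
    rw [hc0, hc1] at h01
    ring_nf at h01 ⊢
    linarith
  -- l‖x - a‖ ≤ ‖G x‖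
  have gradlower : l * ‖x - a‖ ≤ ‖G x‖ := by
    have hkey := mono x a
    rw [hGa, sub_zero] at hkey
    have h2 := real_inner_le_norm (G x) (x - a)
    nlinarith [norm_nonneg (x - a), norm_nonneg (G x), mul_nonneg hl.le (norm_nonneg (x - a))]
  -- Lipschitz in y-gradient across x
  have lipy : ‖grady f a y - grady f x y‖ ≤ l * ‖a - x‖ := by
    have h := hlip a x y y
    simp only [sub_self, norm_zero] at h
    nlinarith [norm_nonneg (grady f a y - grady f x y), norm_nonneg (a - x),
      norm_nonneg (gradx f a y - gradx f x y),
      sq_nonneg (‖grady f a y - grady f x y‖ - l * ‖a - x‖),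
      mul_nonneg hl.le (norm_nonneg (a - x))]
  -- main chain
  have step1 : l/2 * ‖b - a‖^2 ≤ f a (ymax a) - f a y := by
    have h1 : g b ≤ fhat f (2*l) b (ymax b) z := by
      simp only [hgdef, fhat]
      have := hymax b y
      linarith
    have h2 : fhat f (2*l) b (ymax b) z ≤ fhat f (2*l) a (ymax a) z := hxstarz z a
    have h3 : fhat f (2*l) a (ymax a) z - g a = f a (ymax a) - f a y := by
      simp only [hgdef, fhat]; ring
    linarith
  have step2 := hPL a y
  have chain : l * μ * ‖b - a‖^2 ≤ ‖grady f a y‖^2 := by nlinarith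
  have tri : ‖grady f a y‖ ≤ ‖grady f x y‖ + l * ‖a - x‖ := by
    have h1 : ‖grady f a y‖ ≤ ‖grady f x y‖ + ‖grady f a y - grady f x y‖ := by
      have := norm_add_le (grady f x y) (grady f a y - grady f x y)
      simpa using this
    linarith
  have hGx : l * ‖a - x‖ ≤ ‖G x‖ := by
    rw [norm_sub_rev] at gradlower
    exact gradlower
  have final : l * μ * ‖b - a‖^2 ≤ 2 * ‖grady f x y‖^2 + 2 * ‖G x‖^2 := by
    nlinarith [norm_nonneg (grady f a y), norm_nonneg (grady f x y), norm_nonneg (G x),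
      mul_nonneg hl.le (norm_nonneg (a - x)), sq_nonneg (‖grady f x y‖ - l * ‖a - x‖),
      sq_nonneg (‖grady f x y‖ + l * ‖a - x‖ - ‖G x‖)]
  have hba : ‖a - b‖^2 = ‖b - a‖^2 := by rw [norm_sub_rev]
  have hlμ : 0 < l * μ := mul_pos hl hμ
  rw [hba]
  rw [div_mul_eq_mul_div, div_mul_eq_mul_div, ← add_div, le_div_iff₀ hlμ]
  nlinarith [final]
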